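/- For every CBPP instance and every nonnegative real AF_ca-feasible solution (x̄, z̄), there exists a nonnegative real AF_ml-feasible solution (x̄′, z̄) with the same objective value z̄. -/

import Mathlib

open scoped Classical

/-- An instance of the Colored Bin Packing Problem: bin capacity `L > 0`, `Q ≥ 2` colors,
items `Fin n` each with a length in `(0, L]`, a positive demand and a color in `{1, …, Q}`. -/
structure CBPP where
  L : ℕ
  Q : ℕ
  hL : 0 < L
  hQ : 2 ≤ Q
  n : ℕ
  len : Fin n → ℕ
  hlenPos : ∀ u, 0 < len u
  hlenLe : ∀ u, len u ≤ L
  dem : Fin n → ℕ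
  hdemPos : ∀ u, 0 < dem u
  col : Fin n → ℕ
  hcol : ∀ u, col u ∈ Finset.Icc 1 Q

namespace CBPP

variable (P : CBPP)

/-- Item arc `(i, j, q)` of the AF_ca graph: `0 ≤ i < j ≤ L`, color `q ∈ {1,…,Q}`, and there
is an item of length `j − i` and color `q`. -/
def IsItemArc (a : ℕ × ℕ × ℕ) : Prop :=
  a.1 < a.2.1 ∧ a.2.1 ≤ P.L ∧ a.2.2 ∈ Finset.Icc 1 P.Q ∧
    ∃ u : Fin P.n, P.len u = a.2.1 - a.1 ∧ P.col u = a.2.2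

/-- Loss arc `(i, L, Q+1)` of the AF_ca graph, for `1 ≤ i ≤ L − 1`. -/
def IsLossArc (a : ℕ × ℕ × ℕ) : Prop :=
  a.2.2 = P.Q + 1 ∧ a.2.1 = P.L ∧ 1 ≤ a.1 ∧ a.1 ≤ P.L - 1

def IsArc (a : ℕ × ℕ × ℕ) : Prop := P.IsItemArc a ∨ P.IsLossArc a

/-- The (finite) arc set `A` of the AF_ca graph. -/
noncomputable def arcs : Finset (ℕ × ℕ × ℕ) :=
  (Finset.range (P.L + 1) ×ˢ Finset.range (P.L + 1) ×ˢ Finset.range (P.Q + 2)).filter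
    (fun a => P.IsArc a)

/-- Total flow on arcs entering vertex `j`. -/
noncomputable def inflow (x : ℕ × ℕ × ℕ → ℝ) (j : ℕ) : ℝ :=
  ∑ a ∈ P.arcs.filter (fun a => a.2.1 = j), x a

/-- Total flow on arcs leaving vertex `j`. -/
noncomputable def outflow (x : ℕ × ℕ × ℕ → ℝ) (j : ℕ) : ℝ :=
  ∑ a ∈ P.arcs.filter (fun a => a.1 = j), x a

/-- Total flow on arcs of color `q` entering vertex `j`. -/
noncomputable def inflowC (x : ℕ × ℕ × ℕ → ℝ) (j q : ℕ) : ℝ :=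
  ∑ a ∈ P.arcs.filter (fun a => a.2.1 = j ∧ a.2.2 = q), x a

/-- Total flow on arcs of colors in `{1,…,Q+1} \ {q}` leaving vertex `j`. -/
noncomputable def outflowNotC (x : ℕ × ℕ × ℕ → ℝ) (j q : ℕ) : ℝ :=
  ∑ a ∈ P.arcs.filter (fun a => a.1 = j ∧ a.2.2 ≠ q), x a

/-- AF_ca-feasibility of a nonnegative real solution `(x, z)`. -/
structure AFcaFeasible (x : ℕ × ℕ × ℕ → ℝ) (z : ℝ) : Prop where
  nonneg : ∀ a ∈ P.arcs, 0 ≤ x a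
  znonneg : 0 ≤ z
  flow_source : P.inflow x 0 - P.outflow x 0 = -z
  flow_mid : ∀ j, 1 ≤ j → j ≤ P.L - 1 → P.inflow x j - P.outflow x j = 0
  flow_sink : P.inflow x P.L - P.outflow x P.L = z
  color_alt : ∀ j, 1 ≤ j → j ≤ P.L - 1 → ∀ q ∈ Finset.Icc 1 P.Q,
    P.inflowC x j q ≤ P.outflowNotC x j q
  demand : ∀ u : Fin P.n,
    (∑ a ∈ P.arcs.filter (fun a => a.2.1 = a.1 + P.len u ∧ a.2.2 = P.col u), x a) = P.dem u

end CBPP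

namespace CBPP

variable (P : CBPP)

/-- Source arc `((0,0),(j,q))` of the AF_ml graph: some item has length `j` and color `q`. -/
def IsMlSourceArc (a : (ℕ × ℕ) × ℕ × ℕ) : Prop :=
  a.1 = (0, 0) ∧ ∃ u : Fin P.n, P.len u = a.2.1 ∧ P.col u = a.2.2

/-- Item arc `((i,q'),(j,q))` of the AF_ml graph: `1 ≤ i < j ≤ L`, `q' ∈ {1,…,Q}`, `q ≠ q'`,
and some item has length `j − i` and color `q`. -/
def IsMlItemArc (a : (ℕ × ℕ) × ℕ × ℕ) : Prop :=
  1 ≤ a.1.1 ∧ a.1.1 < a.2.1 ∧ a.2.1 ≤ P.L ∧ a.1.2 ∈ Finset.Icc 1 P.Q ∧ a.2.2 ≠ a.1.2 ∧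
    ∃ u : Fin P.n, P.len u = a.2.1 - a.1.1 ∧ P.col u = a.2.2

/-- Loss arc `((i,q),(L,q))` of the AF_ml graph, for `1 ≤ i ≤ L − 1` and `q ∈ {1,…,Q}`. -/
def IsMlLossArc (a : (ℕ × ℕ) × ℕ × ℕ) : Prop :=
  1 ≤ a.1.1 ∧ a.1.1 ≤ P.L - 1 ∧ a.2.1 = P.L ∧ a.2.2 = a.1.2 ∧ a.1.2 ∈ Finset.Icc 1 P.Q

def IsMlArc (a : (ℕ × ℕ) × ℕ × ℕ) : Prop :=
  P.IsMlSourceArc a ∨ P.IsMlItemArc a ∨ P.IsMlLossArc a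

/-- The (finite) arc set of the AF_ml graph. -/
noncomputable def mlArcs : Finset ((ℕ × ℕ) × ℕ × ℕ) :=
  ((Finset.range (P.L + 1) ×ˢ Finset.range (P.Q + 1)) ×ˢ
    (Finset.range (P.L + 1) ×ˢ Finset.range (P.Q + 1))).filter (fun a => P.IsMlArc a)

/-- Total flow on AF_ml arcs entering vertex `v`. -/
noncomputable def mlIn (x : (ℕ × ℕ) × ℕ × ℕ → ℝ) (v : ℕ × ℕ) : ℝ :=
  ∑ a ∈ P.mlArcs.filter (fun a => a.2 = v), x a

/-- Total flow on AF_ml arcs leaving vertex `v`. -/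
noncomputable def mlOut (x : (ℕ × ℕ) × ℕ × ℕ → ℝ) (v : ℕ × ℕ) : ℝ :=
  ∑ a ∈ P.mlArcs.filter (fun a => a.1 = v), x a

/-- AF_ml-feasibility of a nonnegative real solution `(x, z)`. -/
structure AFmlFeasible (x : (ℕ × ℕ) × ℕ × ℕ → ℝ) (z : ℝ) : Prop where
  nonneg : ∀ a ∈ P.mlArcs, 0 ≤ x a
  znonneg : 0 ≤ z
  flow_source : P.mlOut x (0, 0) = z
  flow_mid : ∀ j q, 1 ≤ j → j ≤ P.L - 1 → q ∈ Finset.Icc 1 P.Q →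
    P.mlIn x (j, q) = P.mlOut x (j, q)
  flow_sink : (∑ a ∈ P.mlArcs.filter (fun a => a.2.1 = P.L), x a) = z
  demand : ∀ u : Fin P.n,
    (∑ a ∈ P.mlArcs.filter (fun a =>
      a.2.1 = a.1.1 + P.len u ∧ a.2.2 = P.col u ∧ a.1.2 ≠ P.col u), x a) = P.dem u

end CBPP


namespace CBPP

variable (P : CBPP)

lemma mem_arcs {a : ℕ × ℕ × ℕ} : a ∈ P.arcs ↔ P.IsArc a := by
  unfold arcs
  rw [Finset.mem_filter]
  constructor
  · exact fun h => h.2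
  · intro h
    refine ⟨?_, h⟩
    simp only [Finset.mem_product, Finset.mem_range]
    rcases h with h | h
    · obtain ⟨h1, h2, h3, _⟩ := h
      have h4 := (Finset.mem_Icc.1 h3).2
      omega
    · obtain ⟨h1, h2, h3, h4⟩ := h
      have hL := P.hL
      omega

lemma mem_mlArcs {b : (ℕ × ℕ) × ℕ × ℕ} : b ∈ P.mlArcs ↔ P.IsMlArc b := by
  unfold mlArcs
  rw [Finset.mem_filter]
  constructor
  · exact fun h => h.2
  · intro h
    refine ⟨?_, h⟩
    simp only [Finset.mem_product, Finset.mem_range]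
    have hL := P.hL
    rcases h with h | h | h
    · obtain ⟨h1, u, hu1, hu2⟩ := h
      have h2 := P.hlenLe u
      have h3 := (Finset.mem_Icc.1 (P.hcol u)).2
      have hb1 : b.1.1 = 0 := by rw [h1]
      have hb2 : b.1.2 = 0 := by rw [h1]
      omega
    · obtain ⟨h1, h2, h3, h4, h5, u, hu1, hu2⟩ := h
      have h6 := (Finset.mem_Icc.1 h4).2
      have h7 := (Finset.mem_Icc.1 (P.hcol u)).2
      omega
    · obtain ⟨h1, h2, h3, h4, h5⟩ := h
      have h6 := (Finset.mem_Icc.1 h5).2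
      omega

/-- The projection from AF_ml arcs to AF_ca arcs. -/
def mlProj (b : (ℕ × ℕ) × ℕ × ℕ) : ℕ × ℕ × ℕ :=
  (b.1.1, b.2.1, if b.1.1 ≠ 0 ∧ b.2.2 = b.1.2 then P.Q + 1 else b.2.2)

lemma src_of (b : (ℕ × ℕ) × ℕ × ℕ) (hb : b ∈ P.mlArcs) (h0 : b.1.1 = 0) :
    P.IsMlSourceArc b := by
  rcases (P.mem_mlArcs.1 hb) with h | h | h
  · exact h
  · exact absurd h.1 (by omega)
  · exact absurd h.1 (by omega)

lemma loss_of (b : (ℕ × ℕ) × ℕ × ℕ) (hb : b ∈ P.mlArcs) (h0 : b.1.1 ≠ 0)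
    (h1 : b.2.2 = b.1.2) : P.IsMlLossArc b := by
  rcases (P.mem_mlArcs.1 hb) with h | h | h
  · exact absurd (by rw [h.1]) h0
  · exact absurd h1 h.2.2.2.2.1
  · exact h

lemma item_of (b : (ℕ × ℕ) × ℕ × ℕ) (hb : b ∈ P.mlArcs) (h0 : b.1.1 ≠ 0)
    (h1 : b.2.2 ≠ b.1.2) : P.IsMlItemArc b := by
  rcases (P.mem_mlArcs.1 hb) with h | h | h
  · exact absurd (by rw [h.1]) h0
  · exact h
  · exact absurd h.2.2.2.1 h1

lemma proj_mem (b : (ℕ × ℕ) × ℕ × ℕ) (hb : b ∈ P.mlArcs) : P.mlProj b ∈ P.arcs := by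
  rw [P.mem_arcs]
  unfold mlProj
  by_cases h0 : b.1.1 = 0
  · obtain ⟨h1, u, hu1, hu2⟩ := P.src_of b hb h0
    left
    rw [if_neg (by tauto)]
    refine ⟨?_, ?_, ?_, u, ?_, hu2⟩
    · show b.1.1 < b.2.1
      rw [h0, ← hu1]; exact P.hlenPos u
    · show b.2.1 ≤ P.L
      rw [← hu1]; exact P.hlenLe u
    · show b.2.2 ∈ Finset.Icc 1 P.Q
      rw [← hu2]; exact P.hcol u
    · show P.len u = b.2.1 - b.1.1
      rw [h0, hu1, Nat.sub_zero]
  · by_cases h1 : b.2.2 = b.1.2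
    · obtain ⟨g1, g2, g3, g4, g5⟩ := P.loss_of b hb h0 h1
      right
      rw [if_pos ⟨h0, h1⟩]
      exact ⟨rfl, g3, g1, g2⟩
    · obtain ⟨g1, g2, g3, g4, g5, u, hu1, hu2⟩ := P.item_of b hb h0 h1
      left
      rw [if_neg (by tauto)]
      refine ⟨g2, g3, ?_, u, hu1, hu2⟩
      rw [← hu2]; exact P.hcol u

end CBPP


lemma exists_transport (C : Finset ℕ) (R : Finset ℕ) (hRC : R ⊆ C)
    (r c : ℕ → ℝ) (hr : ∀ i ∈ R, 0 ≤ r i) (hc : ∀ j ∈ C, 0 ≤ c j)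
    (hsum : ∑ i ∈ R, r i = ∑ j ∈ C, c j)
    (hcon : ∀ k ∈ R, r k + c k ≤ ∑ j ∈ C, c j) :
    ∃ y : ℕ → ℕ → ℝ, (∀ i j, 0 ≤ y i j) ∧ (∀ i, y i i = 0) ∧
      (∀ i ∈ R, ∑ j ∈ C, y i j = r i) ∧ (∀ j ∈ C, ∑ i ∈ R, y i j = c j) := by
  induction R using Finset.induction_on generalizing c with
  | empty =>
      refine ⟨fun _ _ => 0, fun _ _ => le_refl 0, fun _ => rfl, fun i hi => absurd hi (by simp),
        fun j hj => ?_⟩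
      simp only [Finset.sum_const_zero]
      have h0 : ∑ j ∈ C, c j = 0 := by simpa using hsum.symm
      exact ((Finset.sum_eq_zero_iff_of_nonneg hc).1 h0 j hj).symm
  | @insert k s hk IH =>
      have hkR : k ∈ insert k s := Finset.mem_insert_self k s
      have hkC : k ∈ C := hRC hkR
      have hsC : s ⊆ C := fun i hi => hRC (Finset.mem_insert_of_mem hi)
      set T := ∑ j ∈ C, c j with hT
      have hrk : 0 ≤ r k := hr k hkR
      have hrs : ∀ i ∈ s, 0 ≤ r i := fun i hi => hr i (Finset.mem_insert_of_mem hi)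
      have hsum' : r k + ∑ i ∈ s, r i = T := by
        rw [← hsum, Finset.sum_insert hk]
      -- lower bounds
      set l : ℕ → ℝ := fun j => if j ∈ s then max 0 (r j + c j + r k - T) else 0 with hldef
      have hl0 : ∀ j, 0 ≤ l j := by
        intro j; simp only [hldef]; split
        · exact le_max_left _ _
        · exact le_refl 0
      have hlk : l k = 0 := by simp [hldef, hk]
      have hlc : ∀ j ∈ C, l j ≤ c j := by
        intro j hj
        simp only [hldef]
        split
        · rename_i hjs
          refine max_le (hc j hj) ?_
          have h1 : r j ≤ ∑ i ∈ s, r i :=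
            Finset.single_le_sum (f := r) hrs hjs
          linarith
        · exact hc j hj
      set Λ := ∑ j ∈ C, l j with hΛdef
      have hΛ_eq : Λ = ∑ j ∈ s, max 0 (r j + c j + r k - T) := by
        rw [hΛdef]
        rw [← Finset.sum_subset hsC (fun j hj hjs => by simp [hldef, hjs])]
        exact Finset.sum_congr rfl (fun j hj => by simp [hldef, hj])
      -- key: Λ ≤ r k
      have hΛ_le : Λ ≤ r k := by
        classical
        set S := s.filter (fun j => 0 < r j + c j + r k - T) with hSdef
        have hΛS : Λ = ∑ j ∈ S, (r j + c j + r k - T) := by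
          rw [hΛ_eq, hSdef, Finset.sum_filter]
          refine Finset.sum_congr rfl (fun j hj => ?_)
          split
          · rename_i h; exact max_eq_right h.le
          · rename_i h; exact max_eq_left (by linarith [not_lt.1 h])
        have hSs : S ⊆ s := Finset.filter_subset _ _
        have hSC : S ⊆ C := hSs.trans hsC
        have hTk : r k ≤ T := by
          have := hcon k hkR; have := hc k hkC; linarith
        rcases Nat.lt_or_ge S.card 2 with hcard | hcard
        · interval_cases h : S.card
          · have : S = ∅ := Finset.card_eq_zero.1 h
            rw [hΛS, this]; simpa using hrk
          · obtain ⟨j, hj⟩ := Finset.card_eq_one.1 h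
            rw [hΛS, hj, Finset.sum_singleton]
            have hjS : j ∈ S := by rw [hj]; exact Finset.mem_singleton_self j
            have := hcon j (Finset.mem_insert_of_mem (hSs hjS))
            linarith
        · have hrS : ∑ j ∈ S, r j ≤ T - r k := by
            have h1 : ∑ i ∈ insert k S, r i ≤ ∑ i ∈ insert k s, r i := by
              refine Finset.sum_le_sum_of_subset_of_nonneg ?_ ?_
              · exact Finset.insert_subset_insert k hSs
              · intro i hi _; exact hr i hi
            rw [Finset.sum_insert (fun hkS => hk (hSs hkS))] at h1
            have h2 : ∑ i ∈ insert k s, r i = T := hsum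
            linarith
          have hcS : ∑ j ∈ S, c j ≤ T := by
            rw [hT]
            exact Finset.sum_le_sum_of_subset_of_nonneg hSC (fun j hj _ => hc j hj)
          have hm : (2 : ℝ) ≤ (S.card : ℝ) := by exact_mod_cast hcard
          have hmono : (S.card : ℝ) * (r k - T) ≤ 2 * (r k - T) :=
            mul_le_mul_of_nonpos_right hm (by linarith)
          have hexp : Λ = ∑ j ∈ S, r j + ∑ j ∈ S, c j + (S.card : ℝ) * (r k - T) := by
            have he : ∑ j ∈ S, (r j + c j + r k - T)
                = ∑ j ∈ S, (r j + (c j + (r k - T))) :=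
              Finset.sum_congr rfl (fun j _ => by ring)
            rw [hΛS, he, Finset.sum_add_distrib, Finset.sum_add_distrib, Finset.sum_const,
              nsmul_eq_mul]
            ring
          rw [hexp]; nlinarith
      have hU : r k ≤ T - c k := by have := hcon k hkR; linarith
      set U : ℝ := T - c k with hUdef
      have hΛU : Λ ≤ U := hΛ_le.trans hU
      set t : ℝ := if U - Λ = 0 then 0 else (r k - Λ) / (U - Λ) with htdef
      have ht0 : 0 ≤ t := by
        rw [htdef]; split
        · exact le_refl 0
        · rename_i h
          have : 0 < U - Λ := lt_of_le_of_ne (by linarith) (Ne.symm h)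
          exact div_nonneg (by linarith) this.le
      have ht1 : t ≤ 1 := by
        rw [htdef]; split
        · exact zero_le_one
        · rename_i h
          have hpos : 0 < U - Λ := lt_of_le_of_ne (by linarith) (Ne.symm h)
          rw [div_le_one hpos]; linarith
      set w : ℕ → ℝ := fun j => if j ∈ C ∧ j ≠ k then l j + t * (c j - l j) else 0 with hwdef
      have hw0 : ∀ j, 0 ≤ w j := by
        intro j; rw [hwdef]; dsimp only; split
        · rename_i h
          have := hl0 j
          have := hlc j h.1
          nlinarith
        · exact le_refl 0
      have hwk : w k = 0 := by simp [hwdef]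
      have hwc : ∀ j ∈ C, w j ≤ c j := by
        intro j hj; rw [hwdef]; dsimp only; split
        · rename_i h
          have h1 := hlc j h.1
          nlinarith
        · exact hc j hj
      have hUsum : ∑ j ∈ C.erase k, c j = U := by
        have := Finset.add_sum_erase C c hkC
        rw [hUdef]; linarith [this]
      have hΛsum : ∑ j ∈ C.erase k, l j = Λ := by
        rw [hΛdef, ← Finset.add_sum_erase C l hkC, hlk]; ring
      have hw_sum : ∑ j ∈ C, w j = r k := by
        rw [← Finset.add_sum_erase C w hkC, hwk, zero_add]
        have hcongr : ∑ j ∈ C.erase k, w j = ∑ j ∈ C.erase k, (l j + t * (c j - l j)) := by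
          refine Finset.sum_congr rfl (fun j hj => ?_)
          rw [hwdef]; dsimp only
          rw [if_pos ⟨Finset.mem_of_mem_erase hj, Finset.ne_of_mem_erase hj⟩]
        rw [hcongr]
        have : ∑ j ∈ C.erase k, (l j + t * (c j - l j)) = Λ + t * (U - Λ) := by
          rw [Finset.sum_add_distrib, hΛsum, ← Finset.mul_sum, Finset.sum_sub_distrib,
            hUsum, hΛsum]
        rw [this, htdef]
        split
        · rename_i h
          have : r k = Λ := le_antisymm (by linarith) hΛ_le
          rw [this]; ring
        · field_simp
          ring
      -- the residual problem
      set c' : ℕ → ℝ := fun j => c j - w j with hc'def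
      have hc'0 : ∀ j ∈ C, 0 ≤ c' j := fun j hj => by
        rw [hc'def]; dsimp only; linarith [hwc j hj]
      have hsum2 : ∑ i ∈ s, r i = ∑ j ∈ C, c' j := by
        rw [hc'def]; dsimp only
        rw [Finset.sum_sub_distrib, hw_sum, ← hT]
        linarith [hsum']
      have hcon2 : ∀ i ∈ s, r i + c' i ≤ ∑ j ∈ C, c' j := by
        intro i hi
        have hC2 : ∑ j ∈ C, c' j = T - r k := by
          rw [hc'def]; dsimp only
          rw [Finset.sum_sub_distrib, hw_sum, ← hT]
        rw [hC2, hc'def]; dsimp only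
        have hwl : l i ≤ w i := by
          rw [hwdef]; dsimp only
          rw [if_pos ⟨hsC hi, fun hik => hk (hik ▸ hi)⟩]
          have h1 := hlc i (hsC hi)
          nlinarith
        have hli : r i + c i + r k - T ≤ l i := by
          simp only [hldef, if_pos hi]
          exact le_max_right _ _
        linarith
      obtain ⟨y', hy'0, hy'diag, hy'row, hy'col⟩ := IH hsC c' hrs hc'0 hsum2 hcon2
      refine ⟨fun i j => if i = k then w j else y' i j, ?_, ?_, ?_, ?_⟩
      · intro i j; dsimp only; split
        · exact hw0 j
        · exact hy'0 i j
      · intro i; dsimp only; split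
        · rename_i h; rw [h]; exact hwk
        · exact hy'diag i
      · intro i hi
        rcases Finset.mem_insert.1 hi with h | h
        · dsimp only; simp only [h, if_pos rfl]; exact hw_sum
        · have hik : i ≠ k := fun hik => hk (hik ▸ h)
          dsimp only; simp only [if_neg hik]; exact hy'row i h
      · intro j hj
        rw [Finset.sum_insert hk]
        dsimp only
        rw [if_pos rfl]
        have : ∑ i ∈ s, (if i = k then w j else y' i j) = ∑ i ∈ s, y' i j := by
          refine Finset.sum_congr rfl (fun i hi => ?_)
          have hik : i ≠ k := fun hik => hk (hik ▸ hi)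
          rw [if_neg hik]
        rw [this, hy'col j hj, hc'def]
        ring

/-- From any nonnegative real AF_ca-feasible solution `(x̄, z̄)` one obtains a nonnegative
real AF_ml-feasible solution `(x̄′, z̄)` with the same objective value `z̄`. -/
theorem stmt_12 (P : CBPP) (x : ℕ × ℕ × ℕ → ℝ) (z : ℝ) (hfeas : P.AFcaFeasible x z) :
    ∃ x' : (ℕ × ℕ) × ℕ × ℕ → ℝ, P.AFmlFeasible x' z := by
  classical
  have hQ1 : 1 ≤ P.Q := le_trans one_le_two P.hQ
  have hL1 : 1 ≤ P.L := P.hL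
  set co : ℕ → ℕ → ℝ :=
    fun i q => ∑ a ∈ P.arcs.filter (fun a => a.1 = i ∧ a.2.2 = q), x a with hco
  have hco_nonneg : ∀ i q, 0 ≤ co i q := fun i q =>
    Finset.sum_nonneg (fun a ha => hfeas.nonneg a (Finset.mem_filter.1 ha).1)
  -- decomposition of inflow by colors
  have hin_dec : ∀ i : ℕ, i ≠ P.L →
      ∑ q ∈ Finset.Icc 1 P.Q, P.inflowC x i q = P.inflow x i := by
    intro i hi
    have hmaps : ∀ a ∈ P.arcs.filter (fun a => a.2.1 = i), a.2.2 ∈ Finset.Icc 1 P.Q := by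
      intro a ha
      rw [Finset.mem_filter] at ha
      rcases P.mem_arcs.1 ha.1 with h | h
      · exact h.2.2.1
      · have h1 := h.2.1
        have h2 := ha.2
        omega
    unfold CBPP.inflow
    rw [← Finset.sum_fiberwise_of_maps_to hmaps x]
    refine Finset.sum_congr rfl (fun q _ => ?_)
    unfold CBPP.inflowC
    rw [Finset.filter_filter]
  have hout_dec : ∀ i : ℕ,
      ∑ q ∈ Finset.Icc 1 (P.Q+1), co i q = P.outflow x i := by
    intro i
    have hmaps : ∀ a ∈ P.arcs.filter (fun a => a.1 = i), a.2.2 ∈ Finset.Icc 1 (P.Q+1) := by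
      intro a ha
      rw [Finset.mem_filter] at ha
      rcases P.mem_arcs.1 ha.1 with h | h
      · have := Finset.mem_Icc.1 h.2.2.1
        rw [Finset.mem_Icc]
        omega
      · rw [Finset.mem_Icc, h.1]
        omega
    unfold CBPP.outflow
    rw [← Finset.sum_fiberwise_of_maps_to hmaps x]
    refine Finset.sum_congr rfl (fun q _ => ?_)
    rw [hco]
    dsimp only
    rw [Finset.filter_filter]
  have key : ∀ i : ℕ, ∃ y : ℕ → ℕ → ℝ, (∀ p q, 0 ≤ y p q) ∧ (∀ p, y p p = 0) ∧
      (1 ≤ i → i ≤ P.L - 1 →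
        (∀ p ∈ Finset.Icc 1 P.Q,
          ∑ q ∈ Finset.Icc 1 (P.Q+1), y p q = P.inflowC x i p) ∧
        (∀ q ∈ Finset.Icc 1 (P.Q+1), ∑ p ∈ Finset.Icc 1 P.Q, y p q = co i q)) := by
    intro i
    by_cases hi : 1 ≤ i ∧ i ≤ P.L - 1
    · obtain ⟨h1, h2⟩ := hi
      have hiL : i ≠ P.L := by omega
      have heq : ∑ p ∈ Finset.Icc 1 P.Q, P.inflowC x i p
          = ∑ q ∈ Finset.Icc 1 (P.Q+1), co i q := by
        rw [hin_dec i hiL, hout_dec i]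
        have := hfeas.flow_mid i h1 h2
        linarith
      have hcon : ∀ k ∈ Finset.Icc 1 P.Q,
          P.inflowC x i k + co i k ≤ ∑ q ∈ Finset.Icc 1 (P.Q+1), co i q := by
        intro k hk
        rw [hout_dec i]
        have hsplit : co i k + P.outflowNotC x i k = P.outflow x i := by
          unfold CBPP.outflow CBPP.outflowNotC
          rw [hco]
          dsimp only
          rw [← Finset.sum_filter_add_sum_filter_not (P.arcs.filter (fun a => a.1 = i))
            (fun a => a.2.2 = k) x]
          congr 1
          · rw [Finset.filter_filter]
          · rw [Finset.filter_filter]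
        have := hfeas.color_alt i h1 h2 k hk
        linarith
      obtain ⟨y, hy1, hy2, hy3, hy4⟩ := exists_transport (Finset.Icc 1 (P.Q+1))
        (Finset.Icc 1 P.Q) (Finset.Icc_subset_Icc le_rfl (Nat.le_succ _))
        (fun p => P.inflowC x i p) (co i)
        (fun p _ => Finset.sum_nonneg (fun a ha => hfeas.nonneg a (Finset.mem_filter.1 ha).1))
        (fun q _ => hco_nonneg i q) heq hcon
      exact ⟨y, hy1, hy2, fun _ _ => ⟨hy3, hy4⟩⟩
    · exact ⟨fun _ _ => 0, fun _ _ => le_refl 0, fun _ => rfl,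
        fun ha hb => absurd ⟨ha, hb⟩ hi⟩
  choose Y hY using key
  have hY0 : ∀ i p q, 0 ≤ Y i p q := fun i => (hY i).1
  have hYdiag : ∀ i p, Y i p p = 0 := fun i => (hY i).2.1
  have hYrow : ∀ i, 1 ≤ i → i ≤ P.L - 1 → ∀ p ∈ Finset.Icc 1 P.Q,
      ∑ q ∈ Finset.Icc 1 (P.Q+1), Y i p q = P.inflowC x i p :=
    fun i h1 h2 => ((hY i).2.2 h1 h2).1
  have hYcol : ∀ i, 1 ≤ i → i ≤ P.L - 1 → ∀ q ∈ Finset.Icc 1 (P.Q+1),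
      ∑ p ∈ Finset.Icc 1 P.Q, Y i p q = co i q :=
    fun i h1 h2 => ((hY i).2.2 h1 h2).2
  set x' : (ℕ × ℕ) × ℕ × ℕ → ℝ := fun b =>
    if b.1.1 = 0 then x (0, b.2.1, b.2.2)
    else if b.2.1 = P.L ∧ b.2.2 = b.1.2 then Y b.1.1 b.1.2 (P.Q + 1)
    else if co b.1.1 b.2.2 = 0 then 0
    else x (b.1.1, b.2.1, b.2.2) * Y b.1.1 b.1.2 b.2.2 / co b.1.1 b.2.2
    with hx'
  -- the fiber lemma
  have hfiber : ∀ a ∈ P.arcs, ∑ b ∈ P.mlArcs.filter (fun b => P.mlProj b = a), x' b = x a := by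
    rintro ⟨i, j, q⟩ ha
    rcases P.mem_arcs.1 ha with hitem | hloss
    · obtain ⟨g1, g2, g3, u, hu1, hu2⟩ := hitem
      have g1' : i < j := g1
      have g2' : j ≤ P.L := g2
      have g3' : q ∈ Finset.Icc 1 P.Q := g3
      have hu1' : P.len u = j - i := hu1
      have hu2' : P.col u = q := hu2
      have hq1 : 1 ≤ q := (Finset.mem_Icc.1 g3').1
      have hqQ : q ≤ P.Q := (Finset.mem_Icc.1 g3').2
      by_cases hi0 : i = 0
      · subst hi0
        have hset : P.mlArcs.filter (fun b => P.mlProj b = (0, j, q))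
            = {((0,0),(j,q))} := by
          ext b
          obtain ⟨⟨b1, b2⟩, b3, b4⟩ := b
          simp only [Finset.mem_filter, Finset.mem_singleton, CBPP.mlProj, Prod.mk.injEq]
          constructor
          · rintro ⟨hb, hb1, hb3, hcol⟩
            obtain ⟨hsrc, -⟩ := P.src_of _ hb hb1
            simp only [Prod.mk.injEq] at hsrc
            rw [if_neg (by simp [hb1])] at hcol
            exact ⟨⟨hsrc.1, hsrc.2⟩, hb3, hcol⟩
          · rintro ⟨⟨hb1, hb2⟩, hb3, hb4⟩
            subst hb1; subst hb2; subst hb3; subst hb4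
            refine ⟨?_, rfl, rfl, by simp⟩
            rw [P.mem_mlArcs]
            left
            exact ⟨rfl, u, by simpa using hu1', hu2'⟩
        rw [hset, Finset.sum_singleton, hx']
        simp
      · have hi1 : 1 ≤ i := by omega
        have hiL : i ≤ P.L - 1 := by omega
        have hset : P.mlArcs.filter (fun b => P.mlProj b = (i, j, q))
            = ((Finset.Icc 1 P.Q).erase q).image (fun p => ((i, p), (j, q))) := by
          ext b
          obtain ⟨⟨b1, b2⟩, b3, b4⟩ := b
          simp only [Finset.mem_filter, Finset.mem_image, Finset.mem_erase, Finset.mem_Icc,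
            CBPP.mlProj, Prod.mk.injEq]
          constructor
          · rintro ⟨hb, hb1, hb3, hcol⟩
            by_cases hd : b4 = b2
            · rw [if_pos ⟨by simpa [hb1] using hi0, hd⟩] at hcol
              omega
            · rw [if_neg (by tauto)] at hcol
              have hit := P.item_of _ hb (by simpa [hb1] using hi0) hd
              have hb2 := Finset.mem_Icc.1 hit.2.2.2.1
              have hb2' : 1 ≤ b2 ∧ b2 ≤ P.Q := hb2
              exact ⟨b2, by omega, ⟨hb1.symm, rfl⟩, hb3.symm, hcol.symm⟩
          · rintro ⟨p, ⟨hpq, hp1, hpQ⟩, ⟨he1, he2⟩, he3, he4⟩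
            subst he1; subst he2; subst he3; subst he4
            refine ⟨?_, rfl, rfl, by rw [if_neg (by tauto)]⟩
            rw [P.mem_mlArcs]
            right; left
            exact ⟨hi1, g1', g2', Finset.mem_Icc.2 ⟨hp1, hpQ⟩, fun h => hpq h.symm,
              u, hu1', hu2'⟩
        rw [hset, Finset.sum_image (by
          intro p hp p' hp' he
          simpa using he)]
        have hval : ∀ p ∈ (Finset.Icc 1 P.Q).erase q, x' ((i, p), (j, q))
            = if co i q = 0 then 0 else x (i, j, q) * Y i p q / co i q := by
          intro p hp
          have hpq : p ≠ q := (Finset.mem_erase.1 hp).1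
          rw [hx']
          dsimp only
          rw [if_neg hi0, if_neg (by rintro ⟨-, h⟩; exact hpq h.symm)]
        rw [Finset.sum_congr rfl hval]
        by_cases hc0 : co i q = 0
        · simp only [if_pos hc0, Finset.sum_const_zero]
          have hxa : x (i, j, q) ≤ co i q := by
            rw [hco]
            refine Finset.single_le_sum (f := x)
              (fun a ha' => hfeas.nonneg a (Finset.mem_filter.1 ha').1) ?_
            rw [Finset.mem_filter]
            exact ⟨ha, rfl, rfl⟩
          have := hfeas.nonneg _ ha
          rw [hc0] at hxa
          linarith
        · simp only [if_neg hc0]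
          have hsY : ∑ p ∈ (Finset.Icc 1 P.Q).erase q, Y i p q = co i q := by
            have hers : ∑ p ∈ (Finset.Icc 1 P.Q).erase q, Y i p q
                = ∑ p ∈ Finset.Icc 1 P.Q, Y i p q := Finset.sum_erase _ (hYdiag i q)
            rw [hers]
            exact hYcol i hi1 hiL q (Finset.mem_Icc.2 ⟨hq1, by omega⟩)
          rw [show (fun p => x (i, j, q) * Y i p q / co i q)
              = fun p => (x (i, j, q) / co i q) * Y i p q from funext (fun p => by ring)]
          rw [← Finset.mul_sum, hsY]
          field_simp
    · obtain ⟨e1, e2, e3, e4⟩ := hloss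
      have e1' : q = P.Q + 1 := e1
      have e2' : j = P.L := e2
      have e3' : 1 ≤ i := e3
      have e4' : i ≤ P.L - 1 := e4
      subst e1'; subst e2'
      have hi0 : i ≠ 0 := by omega
      have hset : P.mlArcs.filter (fun b => P.mlProj b = (i, P.L, P.Q + 1))
          = (Finset.Icc 1 P.Q).image (fun p => ((i, p), (P.L, p))) := by
        ext b
        obtain ⟨⟨b1, b2⟩, b3, b4⟩ := b
        simp only [Finset.mem_filter, Finset.mem_image, Finset.mem_Icc,
          CBPP.mlProj, Prod.mk.injEq]
        constructor
        · rintro ⟨hb, hb1, hb3, hcol⟩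
          by_cases hd : b4 = b2
          · have hlo := P.loss_of _ hb (by simpa [hb1] using hi0) hd
            have hb2 := Finset.mem_Icc.1 hlo.2.2.2.2
            exact ⟨b2, hb2, ⟨hb1.symm, rfl⟩, hb3.symm, hd.symm⟩
          · rw [if_neg (by tauto)] at hcol
            have hit := P.item_of _ hb (by simpa [hb1] using hi0) hd
            obtain ⟨-, -, -, -, -, u', hu1', hu2'⟩ := hit
            have hcu : 1 ≤ P.col u' ∧ P.col u' ≤ P.Q := Finset.mem_Icc.1 (P.hcol u')
            have hu2'' : P.col u' = b4 := hu2'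
            omega
        · rintro ⟨p, ⟨hp1, hpQ⟩, ⟨he1, he2⟩, he3, he4⟩
          subst he1; subst he2; subst he3; subst he4
          refine ⟨?_, rfl, rfl, by rw [if_pos ⟨by omega, rfl⟩]⟩
          rw [P.mem_mlArcs]
          right; right
          exact ⟨e3', e4', rfl, rfl, Finset.mem_Icc.2 ⟨hp1, hpQ⟩⟩
      have hco_loss : co i (P.Q + 1) = x (i, P.L, P.Q + 1) := by
        rw [hco]
        dsimp only
        rw [show P.arcs.filter (fun a => a.1 = i ∧ a.2.2 = P.Q + 1)
            = {(i, P.L, P.Q + 1)} from ?_, Finset.sum_singleton]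
        ext a
        obtain ⟨a1, a2, a3⟩ := a
        simp only [Finset.mem_filter, Finset.mem_singleton, Prod.mk.injEq]
        constructor
        · rintro ⟨ha', h1', h3'⟩
          rcases P.mem_arcs.1 ha' with h | h
          · have h5 : 1 ≤ a3 ∧ a3 ≤ P.Q := Finset.mem_Icc.1 h.2.2.1
            omega
          · exact ⟨h1', h.2.1, h3'⟩
        · rintro ⟨he1, he2, he3⟩
          subst he1; subst he2; subst he3
          exact ⟨ha, rfl, rfl⟩
      rw [hset, Finset.sum_image (by intro p hp p' hp' he; simpa using he)]
      have hval : ∀ p ∈ Finset.Icc 1 P.Q, x' ((i, p), (P.L, p)) = Y i p (P.Q + 1) := by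
        intro p hp
        rw [hx']
        dsimp only
        rw [if_neg hi0, if_pos ⟨rfl, rfl⟩]
      rw [Finset.sum_congr rfl hval,
        hYcol i e3' e4' (P.Q + 1) (Finset.mem_Icc.2 ⟨by omega, le_rfl⟩), hco_loss]
  -- master lemma
  have hmaster : ∀ pr : ℕ × ℕ × ℕ → Prop,
      ∑ b ∈ P.mlArcs.filter (fun b => pr (P.mlProj b)), x' b
        = ∑ a ∈ P.arcs.filter pr, x a := by
    intro pr
    have hmaps : ∀ b ∈ P.mlArcs.filter (fun b => pr (P.mlProj b)),
        P.mlProj b ∈ P.arcs.filter pr := by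
      intro b hb
      rw [Finset.mem_filter] at hb ⊢
      exact ⟨P.proj_mem b hb.1, hb.2⟩
    rw [← Finset.sum_fiberwise_of_maps_to hmaps x']
    refine Finset.sum_congr rfl (fun a ha => ?_)
    rw [Finset.mem_filter] at ha
    rw [Finset.filter_filter, ← hfiber a ha.1]
    refine Finset.sum_congr (Finset.filter_congr (fun b hb => ?_)) (fun _ _ => rfl)
    constructor
    · exact fun h => h.2
    · exact fun h => ⟨by rw [h]; exact ha.2, h⟩
  have hin0 : P.inflow x 0 = 0 := by
    unfold CBPP.inflow
    rw [Finset.filter_false_of_mem, Finset.sum_empty]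
    intro a ha
    rcases P.mem_arcs.1 ha with h | h
    · have := h.1; omega
    · have := h.2.1; omega
  have houtL : P.outflow x P.L = 0 := by
    unfold CBPP.outflow
    rw [Finset.filter_false_of_mem, Finset.sum_empty]
    intro a ha
    rcases P.mem_arcs.1 ha with h | h
    · have h1 := h.1; have h2 := h.2.1; omega
    · have := h.2.2.2; omega
  refine ⟨x', ?_, hfeas.znonneg, ?_, ?_, ?_, ?_⟩
  · -- nonneg
    intro b hb
    rw [hx']
    dsimp only
    split_ifs with h1 h2 h3
    · have he : (0, b.2.1, b.2.2) = P.mlProj b := by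
        unfold CBPP.mlProj
        rw [if_neg (by simp [h1]), h1]
      rw [he]
      exact hfeas.nonneg _ (P.proj_mem b hb)
    · exact hY0 _ _ _
    · exact le_refl 0
    · have hne : b.2.2 ≠ b.1.2 := fun hc => h2 ⟨(P.loss_of b hb h1 hc).2.2.1, hc⟩
      have he : (b.1.1, b.2.1, b.2.2) = P.mlProj b := by
        unfold CBPP.mlProj
        rw [if_neg (by tauto)]
      refine div_nonneg (mul_nonneg ?_ (hY0 _ _ _)) (hco_nonneg _ _)
      rw [he]
      exact hfeas.nonneg _ (P.proj_mem b hb)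
  · -- flow_source
    have hfe : P.mlArcs.filter (fun b => b.1 = (0, 0))
        = P.mlArcs.filter (fun b => (P.mlProj b).1 = 0) :=
      Finset.filter_congr (fun b hb => by
        constructor
        · intro h
          show b.1.1 = 0
          rw [h]
        · intro h
          exact (P.src_of b hb h).1)
    have hm : ∑ b ∈ P.mlArcs.filter (fun b => (P.mlProj b).1 = 0), x' b
        = ∑ a ∈ P.arcs.filter (fun a => a.1 = 0), x a := by
      convert hmaster (fun a => a.1 = 0) using 2
      all_goals exact (Finset.filter_congr_decidable _ _ _).symm
    unfold CBPP.mlOut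
    rw [hfe, hm]
    have hs := hfeas.flow_source
    rw [hin0] at hs
    have hgoal : P.outflow x 0 = z := by linarith
    exact hgoal
  · -- flow_mid
    intro j q h1 h2 hq
    have hq1 : 1 ≤ q := (Finset.mem_Icc.1 hq).1
    have hqQ : q ≤ P.Q := (Finset.mem_Icc.1 hq).2
    have hjL : j ≠ P.L := by omega
    have hj0 : j ≠ 0 := by omega
    -- inflow side
    have hfe : P.mlArcs.filter (fun b => b.2 = (j, q))
        = P.mlArcs.filter (fun b => (P.mlProj b).2.1 = j ∧ (P.mlProj b).2.2 = q) := by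
      refine Finset.filter_congr (fun b hb => ?_)
      unfold CBPP.mlProj
      constructor
      · intro h
        have hb21 : b.2.1 = j := by rw [h]
        have hb22 : b.2.2 = q := by rw [h]
        refine ⟨hb21, ?_⟩
        dsimp only
        rw [if_neg ?_]
        · exact hb22
        rintro ⟨hne, heq⟩
        have := (P.loss_of b hb hne heq).2.2.1
        omega
      · rintro ⟨ha1, ha2⟩
        dsimp only at ha1 ha2
        by_cases hcond : b.1.1 ≠ 0 ∧ b.2.2 = b.1.2
        · rw [if_pos hcond] at ha2
          omega
        · rw [if_neg hcond] at ha2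
          exact Prod.ext ha1 ha2
    have hmIn : P.mlIn x' (j, q) = P.inflowC x j q := by
      unfold CBPP.mlIn
      rw [hfe]
      have hm : ∑ b ∈ P.mlArcs.filter
            (fun b => (P.mlProj b).2.1 = j ∧ (P.mlProj b).2.2 = q), x' b
          = ∑ a ∈ P.arcs.filter (fun a => a.2.1 = j ∧ a.2.2 = q), x a := by
        convert hmaster (fun a => a.2.1 = j ∧ a.2.2 = q) using 2
        all_goals exact (Finset.filter_congr_decidable _ _ _).symm
      rw [hm]
      rfl
    -- outflow side
    have hmOut : P.mlOut x' (j, q) = ∑ cc ∈ Finset.Icc 1 (P.Q + 1), Y j q cc := by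
      unfold CBPP.mlOut
      rw [← Finset.sum_filter_add_sum_filter_not (P.mlArcs.filter (fun b => b.1 = (j, q)))
        (fun b => b.2.2 = q) x']
      have hpart1 : (P.mlArcs.filter (fun b => b.1 = (j, q))).filter (fun b => b.2.2 = q)
          = {((j, q), (P.L, q))} := by
        ext b
        obtain ⟨⟨b1, b2⟩, b3, b4⟩ := b
        simp only [Finset.mem_filter, Finset.mem_singleton, Prod.mk.injEq]
        constructor
        · rintro ⟨⟨hb, hb1, hb2⟩, hb4⟩
          have hlo := P.loss_of _ hb (by simpa [hb1] using hj0) (by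
            show b4 = b2
            rw [hb4, hb2])
          exact ⟨⟨hb1, hb2⟩, hlo.2.2.1, hb4⟩
        · rintro ⟨⟨e1, e2⟩, e3, e4⟩
          subst e1; subst e2; subst e3; subst e4
          refine ⟨⟨?_, rfl, rfl⟩, rfl⟩
          rw [P.mem_mlArcs]
          right; right
          exact ⟨h1, h2, rfl, rfl, hq⟩
      have hval1 : x' ((j, q), (P.L, q)) = Y j q (P.Q + 1) := by
        rw [hx']
        dsimp only
        rw [if_neg hj0, if_pos ⟨rfl, rfl⟩]
      have hpart2 : ∑ b ∈ (P.mlArcs.filter (fun b => b.1 = (j, q))).filter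
            (fun b => ¬b.2.2 = q), x' b
          = ∑ cc ∈ (Finset.Icc 1 P.Q).erase q, Y j q cc := by
        have hbij : ∑ b ∈ (P.mlArcs.filter (fun b => b.1 = (j, q))).filter
              (fun b => ¬b.2.2 = q), x' b
            = ∑ a ∈ P.arcs.filter
                (fun a => a.1 = j ∧ a.2.2 ∈ Finset.Icc 1 P.Q ∧ a.2.2 ≠ q),
              (if co j a.2.2 = 0 then 0 else x a * Y j q a.2.2 / co j a.2.2) := by
          rw [Finset.filter_filter]
          refine Finset.sum_nbij' (fun b => (j, b.2.1, b.2.2))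
            (fun a => ((j, q), a.2.1, a.2.2)) ?_ ?_ ?_ ?_ ?_
          · intro b hb
            rw [Finset.mem_filter] at hb
            obtain ⟨hb, hb1, hb2⟩ := hb
            have hbj : b.1.1 = j := by rw [hb1]
            have hbq : b.1.2 = q := by rw [hb1]
            have hit := P.item_of b hb (by omega) (by rw [hbq]; exact hb2)
            obtain ⟨k1, k2, k3, k4, k5, u', hu1', hu2'⟩ := hit
            have hIcc : b.2.2 ∈ Finset.Icc 1 P.Q := by
              rw [← hu2']; exact P.hcol u'
            rw [Finset.mem_filter]
            refine ⟨?_, rfl, hIcc, hb2⟩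
            rw [P.mem_arcs]
            left
            refine ⟨?_, k3, hIcc, u', ?_, hu2'⟩
            · show j < b.2.1
              rw [← hbj]; exact k2
            · show P.len u' = b.2.1 - j
              rw [← hbj]; exact hu1'
          · intro a ha'
            rw [Finset.mem_filter] at ha'
            obtain ⟨ha', ha1, haI, haq⟩ := ha'
            rw [Finset.mem_filter]
            refine ⟨?_, rfl, haq⟩
            rw [P.mem_mlArcs]
            right; left
            rcases P.mem_arcs.1 ha' with h | h
            · obtain ⟨m1, m2, m3, u', hu1', hu2'⟩ := h
              refine ⟨h1, ?_, m2, hq, haq, u', ?_, hu2'⟩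
              · show j < a.2.1
                rw [← ha1]; exact m1
              · show P.len u' = a.2.1 - j
                rw [← ha1]; exact hu1'
            · exfalso
              have hI := Finset.mem_Icc.1 haI
              have := h.1
              omega
          · intro b hb
            rw [Finset.mem_filter] at hb
            obtain ⟨hb, hb1, hb2⟩ := hb
            show ((j, q), b.2.1, b.2.2) = b
            rw [← hb1]
          · intro a ha'
            rw [Finset.mem_filter] at ha'
            show (j, a.2.1, a.2.2) = a
            rw [← ha'.2.1]
          · intro b hb
            rw [Finset.mem_filter] at hb
            obtain ⟨hb, hb1, hb2⟩ := hb
            have hbj : b.1.1 = j := by rw [hb1]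
            have hbq : b.1.2 = q := by rw [hb1]
            rw [hx']
            dsimp only
            rw [if_neg (by omega), if_neg (by
              rintro ⟨-, hh⟩
              rw [hbq] at hh
              exact hb2 hh)]
            rw [hbj, hbq]
        rw [hbij]
        have hmaps : ∀ a ∈ P.arcs.filter
            (fun a => a.1 = j ∧ a.2.2 ∈ Finset.Icc 1 P.Q ∧ a.2.2 ≠ q),
            a.2.2 ∈ (Finset.Icc 1 P.Q).erase q := by
          intro a ha'
          rw [Finset.mem_filter] at ha'
          exact Finset.mem_erase.2 ⟨ha'.2.2.2, ha'.2.2.1⟩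
        rw [← Finset.sum_fiberwise_of_maps_to hmaps
          (fun a => if co j a.2.2 = 0 then 0 else x a * Y j q a.2.2 / co j a.2.2)]
        refine Finset.sum_congr rfl (fun cc hcc => ?_)
        obtain ⟨hccq, hcc'⟩ := Finset.mem_erase.1 hcc
        have hccI := Finset.mem_Icc.1 hcc'
        have hTT : (P.arcs.filter
              (fun a => a.1 = j ∧ a.2.2 ∈ Finset.Icc 1 P.Q ∧ a.2.2 ≠ q)).filter
              (fun a => a.2.2 = cc)
            = P.arcs.filter (fun a => a.1 = j ∧ a.2.2 = cc) := by
          rw [Finset.filter_filter]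
          refine Finset.filter_congr (fun a _ => ?_)
          constructor
          · rintro ⟨⟨m1, m2, m3⟩, m4⟩
            exact ⟨m1, m4⟩
          · rintro ⟨m1, m2⟩
            exact ⟨⟨m1, by rw [m2]; exact hcc', by rw [m2]; exact hccq⟩, m2⟩
        rw [hTT]
        by_cases hc0 : co j cc = 0
        · have hz : ∀ a ∈ P.arcs.filter (fun a => a.1 = j ∧ a.2.2 = cc),
              (if co j a.2.2 = 0 then 0 else x a * Y j q a.2.2 / co j a.2.2) = 0 := by
            intro a ha'
            rw [Finset.mem_filter] at ha'
            rw [ha'.2.2, if_pos hc0]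
          rw [Finset.sum_congr rfl hz, Finset.sum_const_zero]
          have hcol0 : ∑ p ∈ Finset.Icc 1 P.Q, Y j p cc = 0 := by
            rw [hYcol j h1 h2 cc (Finset.mem_Icc.2 ⟨hccI.1, by omega⟩)]
            exact hc0
          exact ((Finset.sum_eq_zero_iff_of_nonneg
            (fun p _ => hY0 j p cc)).1 hcol0 q hq).symm
        · have hz : ∀ a ∈ P.arcs.filter (fun a => a.1 = j ∧ a.2.2 = cc),
              (if co j a.2.2 = 0 then 0 else x a * Y j q a.2.2 / co j a.2.2)
                = x a * (Y j q cc / co j cc) := by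
            intro a ha'
            rw [Finset.mem_filter] at ha'
            rw [ha'.2.2, if_neg hc0, mul_div_assoc]
          rw [Finset.sum_congr rfl hz, ← Finset.sum_mul]
          have hcoeq : ∑ a ∈ P.arcs.filter (fun a => a.1 = j ∧ a.2.2 = cc), x a
              = co j cc := rfl
          rw [hcoeq, ← mul_div_assoc, mul_div_cancel_left₀ _ hc0]
      have hers : ∑ cc ∈ (Finset.Icc 1 P.Q).erase q, Y j q cc
          = ∑ cc ∈ Finset.Icc 1 P.Q, Y j q cc := Finset.sum_erase _ (hYdiag j q)
      rw [hpart1, hpart2, Finset.sum_singleton, hval1, hers,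
        Finset.sum_Icc_succ_top (by omega : 1 ≤ P.Q + 1) (Y j q)]
      ring
    rw [hmIn, hmOut]
    exact (hYrow j h1 h2 q hq).symm
  · -- flow_sink
    have hfe : P.mlArcs.filter (fun b => b.2.1 = P.L)
        = P.mlArcs.filter (fun b => (P.mlProj b).2.1 = P.L) :=
      Finset.filter_congr (fun b hb => Iff.rfl)
    have hm : ∑ b ∈ P.mlArcs.filter (fun b => (P.mlProj b).2.1 = P.L), x' b
        = ∑ a ∈ P.arcs.filter (fun a => a.2.1 = P.L), x a := by
      convert hmaster (fun a => a.2.1 = P.L) using 2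
      all_goals exact (Finset.filter_congr_decidable _ _ _).symm
    rw [hfe, hm]
    have hs := hfeas.flow_sink
    rw [houtL] at hs
    have hgoal : P.inflow x P.L = z := by linarith
    exact hgoal
  · -- demand
    intro u
    have hc := Finset.mem_Icc.1 (P.hcol u)
    have hfe : P.mlArcs.filter
          (fun b => b.2.1 = b.1.1 + P.len u ∧ b.2.2 = P.col u ∧ b.1.2 ≠ P.col u)
        = P.mlArcs.filter (fun b => (P.mlProj b).2.1 = (P.mlProj b).1 + P.len u ∧
            (P.mlProj b).2.2 = P.col u) := by
      refine Finset.filter_congr (fun b hb => ?_)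
      unfold CBPP.mlProj
      dsimp only
      constructor
      · rintro ⟨k1, k2, k3⟩
        refine ⟨k1, ?_⟩
        rw [if_neg ?_]
        · exact k2
        rintro ⟨hne, heq⟩
        rw [k2] at heq
        exact k3 heq.symm
      · rintro ⟨k1, k2⟩
        by_cases hcond : b.1.1 ≠ 0 ∧ b.2.2 = b.1.2
        · rw [if_pos hcond] at k2
          omega
        · rw [if_neg hcond] at k2
          refine ⟨k1, k2, ?_⟩
          by_cases hb0 : b.1.1 = 0
          · have hsrc := (P.src_of b hb hb0).1
            have hb12 : b.1.2 = 0 := by rw [hsrc]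
            omega
          · intro hcc
            exact hcond ⟨hb0, by rw [k2, hcc]⟩
    have hm : ∑ b ∈ P.mlArcs.filter (fun b => (P.mlProj b).2.1 = (P.mlProj b).1 + P.len u ∧
          (P.mlProj b).2.2 = P.col u), x' b
        = ∑ a ∈ P.arcs.filter (fun a => a.2.1 = a.1 + P.len u ∧ a.2.2 = P.col u), x a := by
      convert hmaster (fun a => a.2.1 = a.1 + P.len u ∧ a.2.2 = P.col u) using 2
      all_goals exact (Finset.filter_congr_decidable _ _ _).symm
    rw [hfe, hm]
    exact hfeas.demand u
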